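/- Let R, A, B, a, b, h, v, T₁, T₂ be as in the context, with h, v and h∘v having no fixed points. Assume that for every α ∈ A the fiber {s ∈ R : a(s) = α} has at least 3 elements and for every β ∈ B the fiber {s ∈ R : b(s) = β} has at least 3 elements. If λ ∈ ℤR satisfies (T₁ − id) λ = 0 and (T₂ − id) λ = 0, then for every s ∈ R one has λ(h s) = −λ(s), λ(v s) = −λ(s), and λ(h(v s)) = λ(s). -/
import Mathlib


open Finsupp

/-- From `T lam = lam` and the formula for `T` on basis vectors, derive the
pointwise equation `lam s + lam (h s) = ∑_{b u = b s} lam (h u)`. -/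
theorem key_of_aux {R B : Type*} [Fintype R] [Fintype B] [DecidableEq R] [DecidableEq B]
    (b : R → B) (h : R → R) (hh : ∀ t, h (h t) = t)
    (T : (R →₀ ℤ) →ₗ[ℤ] (R →₀ ℤ))
    (hT : ∀ t : R, T (single t 1) =
      (∑ s ∈ Finset.univ.filter fun s => b s = b (h t), single s (1 : ℤ)) - single (h t) 1)
    (lam : R →₀ ℤ) (hlam : T lam = lam) (s : R) :
    lam s + lam (h s) = ∑ u ∈ Finset.univ.filter (fun u => b u = b s), lam (h u) := by
  have hl : lam = ∑ t : R, (lam t) • (single t (1 : ℤ)) := by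
    conv_lhs => rw [← Finsupp.univ_sum_single lam]
    refine Finset.sum_congr rfl (fun t _ => ?_)
    rw [Finsupp.smul_single, smul_eq_mul, mul_one]
  have hTs : ∀ t : R, (T (single t (1:ℤ))) s =
      (if b s = b (h t) then (1:ℤ) else 0) - (if s = h t then 1 else 0) := by
    intro t
    rw [hT t, Finsupp.sub_apply, Finsupp.single_apply, Finsupp.finset_sum_apply]
    simp only [Finsupp.single_apply]
    rw [Finset.sum_ite_eq' (Finset.univ.filter fun s' => b s' = b (h t)) s (fun _ => (1:ℤ))]
    simp only [Finset.mem_filter, Finset.mem_univ, true_and]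
    congr 1
    exact if_congr eq_comm rfl rfl
  have hTl : (T lam) s = ∑ t : R, lam t * ((T (single t (1:ℤ))) s) := by
    conv_lhs => rw [hl]
    rw [map_sum, Finsupp.finset_sum_apply]
    refine Finset.sum_congr rfl (fun t _ => ?_)
    rw [map_smul, Finsupp.smul_apply, smul_eq_mul]
  have hmain : lam s = (∑ t : R, lam t * (if b s = b (h t) then (1:ℤ) else 0)) - lam (h s) := by
    conv_lhs => rw [← hlam]
    rw [hTl]
    have : ∀ t : R, lam t * ((T (single t (1:ℤ))) s)
        = lam t * (if b s = b (h t) then (1:ℤ) else 0) - lam t * (if t = h s then 1 else 0) := by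
      intro t
      rw [hTs t, mul_sub]
      congr 2
      by_cases ht : t = h s
      · simp [ht, hh]
      · have : s ≠ h t := by
          intro hst
          exact ht (by rw [hst, hh])
        simp [ht, this]
    rw [Finset.sum_congr rfl (fun t _ => this t), Finset.sum_sub_distrib]
    congr 1
    rw [Finset.sum_eq_single (h s)]
    · simp
    · intro t _ ht; simp [ht]
    · intro habs; exact absurd (Finset.mem_univ _) habs
  have hre : (∑ t : R, lam t * (if b s = b (h t) then (1:ℤ) else 0))
      = ∑ u ∈ Finset.univ.filter (fun u => b u = b s), lam (h u) := by
    have e : ∑ u : R, lam (h u) * (if b s = b u then (1:ℤ) else 0)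
        = ∑ t : R, lam t * (if b s = b (h t) then (1:ℤ) else 0) := by
      refine Fintype.sum_equiv (Function.Involutive.toPerm h hh) _ _ (fun u => ?_)
      simp [Function.Involutive.toPerm, hh]
    rw [← e]
    rw [Finset.sum_filter]
    refine Finset.sum_congr rfl (fun u _ => ?_)
    by_cases hb : b u = b s
    · rw [if_pos hb, if_pos hb.symm, mul_one]
    · rw [if_neg hb, if_neg (fun hbs : b s = b u => hb hbs.symm), mul_zero]
  rw [hmain, hre]
  ring

/-- Antisymmetry from the pointwise equation, provided all fibers of `b`
have at least three elements. -/
theorem antisym_aux {R B : Type*} [Fintype R] [Fintype B] [DecidableEq R] [DecidableEq B]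
    (b : R → B) (h : R → R) (hh : ∀ t, h (h t) = t)
    (hbfib : ∀ β : B, 3 ≤ (Finset.univ.filter fun s => b s = β).card)
    (lam : R →₀ ℤ)
    (key : ∀ s : R, lam s + lam (h s) =
      ∑ u ∈ Finset.univ.filter (fun u => b u = b s), lam (h u)) :
    ∀ s : R, lam (h s) = - lam s := by
  set F : B → ℤ := fun β => ∑ u ∈ Finset.univ.filter (fun u => b u = β), lam (h u) with hF
  set n : B → ℤ := fun β => ((Finset.univ.filter fun s => b s = β).card : ℤ) with hn
  have key' : ∀ s : R, lam (h s) = F (b s) - lam s := by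
    intro s
    have := key s
    simp only [hF]
    omega
  -- fiber sums
  have hfsum : ∀ β : B, ∑ u ∈ Finset.univ.filter (fun u => b u = β), lam u
      = (n β - 1) * F β := by
    intro β
    have h1 : F β = ∑ u ∈ Finset.univ.filter (fun u => b u = β), (F β - lam u) := by
      rw [hF]
      refine Finset.sum_congr rfl (fun u hu => ?_)
      have hbu : b u = β := (Finset.mem_filter.mp hu).2
      rw [key' u, hbu]
    rw [Finset.sum_sub_distrib, Finset.sum_const, nsmul_eq_mul] at h1
    have hcard : ((Finset.univ.filter fun u => b u = β).card : ℤ) = n β := by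
      simp only [hn]
    rw [hcard] at h1
    have h2 : ∑ u ∈ Finset.univ.filter (fun u => b u = β), lam u = n β * F β - F β := by
      linarith
    rw [h2]; ring
  -- global square identity
  have hsq : ∑ s : R, (lam (h s))^2 = ∑ s : R, (lam s)^2 := by
    refine Fintype.sum_equiv (Function.Involutive.toPerm h hh) _ _ (fun s => ?_)
    simp [Function.Involutive.toPerm]
  have hexp : ∑ s : R, (lam (h s))^2
      = (∑ s : R, (F (b s))^2) - 2 * (∑ s : R, F (b s) * lam s) + ∑ s : R, (lam s)^2 := by
    rw [Finset.mul_sum, ← Finset.sum_sub_distrib, ← Finset.sum_add_distrib]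
    refine Finset.sum_congr rfl (fun s _ => ?_)
    rw [key' s]
    ring
  have hA : ∑ s : R, (F (b s))^2 = 2 * ∑ s : R, F (b s) * lam s := by
    have := hexp
    rw [hsq] at this
    linarith
  -- fiberwise regrouping
  have hB1 : ∑ s : R, (F (b s))^2 = ∑ β : B, n β * (F β)^2 := by
    rw [← Finset.sum_fiberwise Finset.univ b (fun s => (F (b s))^2)]
    refine Finset.sum_congr rfl (fun β _ => ?_)
    have : ∀ s ∈ Finset.univ.filter (fun s => b s = β), (F (b s))^2 = (F β)^2 := by
      intro s hs
      rw [(Finset.mem_filter.mp hs).2]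
    rw [Finset.sum_congr rfl this, Finset.sum_const, nsmul_eq_mul, hn]
  have hB2 : ∑ s : R, F (b s) * lam s = ∑ β : B, (n β - 1) * (F β)^2 := by
    rw [← Finset.sum_fiberwise Finset.univ b (fun s => F (b s) * lam s)]
    refine Finset.sum_congr rfl (fun β _ => ?_)
    have : ∀ s ∈ Finset.univ.filter (fun s => b s = β), F (b s) * lam s = F β * lam s := by
      intro s hs
      rw [(Finset.mem_filter.mp hs).2]
    rw [Finset.sum_congr rfl this, ← Finset.mul_sum, hfsum β]
    ring
  have hzero : ∑ β : B, (n β - 2) * (F β)^2 = 0 := by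
    have : ∑ β : B, (n β - 2) * (F β)^2
        = 2 * (∑ β : B, (n β - 1) * (F β)^2) - ∑ β : B, n β * (F β)^2 := by
      rw [Finset.mul_sum, ← Finset.sum_sub_distrib]
      refine Finset.sum_congr rfl (fun β _ => ?_)
      ring
    rw [this, ← hB1, ← hB2, hA]
    ring
  have hFzero : ∀ β : B, F β = 0 := by
    intro β
    have hterm : ∀ γ ∈ (Finset.univ : Finset B), 0 ≤ (n γ - 2) * (F γ)^2 := by
      intro γ _
      have h3 : (3 : ℤ) ≤ n γ := by
        simp only [hn]; exact_mod_cast hbfib γ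
      nlinarith [sq_nonneg (F γ)]
    have := (Finset.sum_eq_zero_iff_of_nonneg hterm).mp hzero β (Finset.mem_univ β)
    have h3 : (3 : ℤ) ≤ n β := by
      simp only [hn]; exact_mod_cast hbfib β
    nlinarith [sq_nonneg (F β)]
  intro s
  rw [key' s, hFzero (b s)]
  ring

/-- **Antisymmetry of coefficients (equations (8)–(10) of the paper):**
if `λ` is killed by `T₁ − id` and `T₂ − id` and all fibers of `a` and `b`
have at least three elements, then `λ(h s) = −λ(s)`, `λ(v s) = −λ(s)` and
`λ(h(v s)) = λ(s)` for every `s`. -/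
theorem stmt_6
    {R A B : Type*} [Fintype R] [Fintype A] [Fintype B]
    [DecidableEq R] [DecidableEq A] [DecidableEq B]
    (a : R → A) (b : R → B) (h v : R → R)
    (hh : ∀ t, h (h t) = t) (hv : ∀ t, v (v t) = t)
    (hcomm : ∀ t, h (v t) = v (h t))
    (hfix : ∀ t, h t ≠ t) (vfix : ∀ t, v t ≠ t) (hvfix : ∀ t, h (v t) ≠ t)
    (T₁ T₂ : (R →₀ ℤ) →ₗ[ℤ] (R →₀ ℤ))
    (hT₁ : ∀ t : R, T₁ (single t 1) =
      (∑ s ∈ Finset.univ.filter fun s => b s = b (h t), single s (1 : ℤ)) - single (h t) 1)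
    (hT₂ : ∀ t : R, T₂ (single t 1) =
      (∑ s ∈ Finset.univ.filter fun s => a s = a (v t), single s (1 : ℤ)) - single (v t) 1)
    (hafib : ∀ α : A, 3 ≤ (Finset.univ.filter fun s => a s = α).card)
    (hbfib : ∀ β : B, 3 ≤ (Finset.univ.filter fun s => b s = β).card)
    (lam : R →₀ ℤ)
    (h₁ : (T₁ - LinearMap.id : (R →₀ ℤ) →ₗ[ℤ] (R →₀ ℤ)) lam = 0)
    (h₂ : (T₂ - LinearMap.id : (R →₀ ℤ) →ₗ[ℤ] (R →₀ ℤ)) lam = 0) :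
    ∀ s : R, lam (h s) = -lam s ∧ lam (v s) = -lam s ∧ lam (h (v s)) = lam s := by
  have e₁ : T₁ lam = lam := by
    rw [LinearMap.sub_apply, LinearMap.id_apply, sub_eq_zero] at h₁
    exact h₁
  have e₂ : T₂ lam = lam := by
    rw [LinearMap.sub_apply, LinearMap.id_apply, sub_eq_zero] at h₂
    exact h₂
  have hH : ∀ s : R, lam (h s) = - lam s :=
    antisym_aux b h hh hbfib lam (key_of_aux b h hh T₁ hT₁ lam e₁)
  have hV : ∀ s : R, lam (v s) = - lam s :=
    antisym_aux a v hv hafib lam (key_of_aux a v hv T₂ hT₂ lam e₂)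
  intro s
  refine ⟨hH s, hV s, ?_⟩
  rw [hH (v s), hV s, neg_neg]
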